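/- Let z > 0 be real, N ≥ 0 an integer, and ε a complex number with ε + j ≠ 0 for every integer j ≥ 1; set ν = N + ε. Then ∂/∂ν J_ν(z) = (log(z/2) − ψ(1+ε))·J_ν(z) + [(z/2)^ν/Γ(1+ε)] · ∑_{m=0}^∞ [(−z²/4)^m/m!] · ∑_{j=1}^{m+N} [(−1)^j/((j−1)!·(m+N−j)!)] · 1/(ε+j)², where the inner sum is empty (equal to 0) when m+N = 0. -/

import Mathlib

open scoped BigOperators

/-- The reciprocal of the complex Gamma function, an entire function
(Mathlib's `Complex.Gamma` vanishes at nonpositive integers, so the inverse is `0` there). -/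
noncomputable def Grec (t : ℂ) : ℂ := (Complex.Gamma t)⁻¹

/-- `G k t` is the `k`-th derivative of the reciprocal Gamma function at `t`. -/
noncomputable def G (k : ℕ) (t : ℂ) : ℂ := iteratedDeriv k Grec t

/-- The Maclaurin coefficients of `1/Γ`: `c j = G^{(j)}(0)/j!`. -/
noncomputable def mcCoeff (j : ℕ) : ℂ := iteratedDeriv j Grec 0 / (j.factorial : ℂ)

/-- Bessel function of the first kind `J_ν(z)` for real `z > 0` and complex order `ν`,
with `(z/2)^ν = exp (ν log (z/2))`. -/
noncomputable def besselJ (z : ℝ) (ν : ℂ) : ℂ :=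
  Complex.exp (ν * Complex.log ((z : ℂ) / 2)) *
    ∑' m : ℕ, (-(z : ℂ) ^ 2 / 4) ^ m / ((m.factorial : ℂ) * Complex.Gamma (ν + 1 + m))

/-- Pochhammer symbol `(t)_m = t (t+1) ⋯ (t+m-1)`. -/
noncomputable def poch (t : ℂ) (m : ℕ) : ℂ := ∏ i ∈ Finset.range m, (t + i)

/-- `P m k t = (1/k!) dᵏ/dtᵏ (t)_m`. -/
noncomputable def P (m k : ℕ) (t : ℂ) : ℂ :=
  ((k.factorial : ℂ))⁻¹ * iteratedDeriv k (fun s => poch s m) t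

/-- `Q m k t = (1/k!) dᵏ/dtᵏ (1/(t)_m)`. -/
noncomputable def Q (m k : ℕ) (t : ℂ) : ℂ :=
  ((k.factorial : ℂ))⁻¹ * iteratedDeriv k (fun s => (poch s m)⁻¹) t

/-- Signed Stirling numbers of the first kind: `s(n,k)` is the coefficient of `x^k`
in `x(x-1)⋯(x-n+1)`. -/
noncomputable def stirS (n k : ℕ) : ℤ := (descPochhammer ℤ n).coeff k

/-- Modified generalized harmonic numbers `Ĥ_m^{(k)}`. -/
noncomputable def Hhat (m k : ℕ) : ℝ :=
  if m = 0 then (if k = 0 then 1 else 0)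
  else ∑ j ∈ Finset.Icc 1 m, (-1 : ℝ) ^ (j - 1) * (m.choose j) / (j : ℝ) ^ k

/-- Digamma function `ψ = Γ'/Γ`. -/
noncomputable def digamma (t : ℂ) : ℂ := deriv Complex.Gamma t / Complex.Gamma t


open Finset Metric


lemma differentiable_Grec : Differentiable ℂ Grec := Complex.differentiable_one_div_Gamma

lemma hasDerivAt_Grec (t : ℂ) : HasDerivAt Grec (deriv Grec t) t :=
  (differentiable_Grec t).hasDerivAt

lemma continuous_Grec : Continuous Grec := differentiable_Grec.continuous

lemma continuous_derivGrec : Continuous (deriv Grec) := by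
  have h : AnalyticOnNhd ℂ Grec Set.univ := fun z _ => differentiable_Grec.analyticAt z
  exact continuous_iff_continuousAt.2 fun z =>
    (h.deriv z (Set.mem_univ z)).continuousAt

lemma Grec_add_one {s : ℂ} (hs : s ≠ 0) : Grec (s + 1) = s⁻¹ * Grec s := by
  unfold Grec
  rw [Complex.Gamma_add_one s hs, mul_inv]

lemma deriv_Grec_add_one {s : ℂ} (hs : s ≠ 0) :
    deriv Grec (s + 1) = -((s ^ 2)⁻¹) * Grec s + s⁻¹ * deriv Grec s := by
  have hmem : {t : ℂ | t - 1 ≠ 0} ∈ nhds (s + 1) := by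
    apply IsOpen.mem_nhds
    · exact isOpen_ne.preimage (continuous_id.sub continuous_const)
    · simpa using hs
  have heq : Grec =ᶠ[nhds (s+1)] fun t => (t - 1)⁻¹ * Grec (t - 1) := by
    filter_upwards [hmem] with t ht
    have h2 : Grec ((t-1)+1) = (t-1)⁻¹ * Grec (t-1) := Grec_add_one ht
    simpa using h2
  have ha : HasDerivAt (fun t : ℂ => (t - 1)⁻¹) (-(1:ℂ) / (s+1-1)^2) (s+1) :=
    ((hasDerivAt_id (s+1)).sub_const 1).inv (by simpa using hs)
  have hb : HasDerivAt (fun t : ℂ => Grec (t - 1)) (deriv Grec (s+1-1) * 1) (s+1) := by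
    have := (hasDerivAt_Grec (s+1-1)).comp (s+1) ((hasDerivAt_id (s+1)).sub_const 1); exact this
  have h1 : HasDerivAt (fun t : ℂ => (t - 1)⁻¹ * Grec (t - 1)) _ (s+1) := ha.mul hb
  rw [heq.deriv_eq, h1.deriv]
  simp only [add_sub_cancel_right]
  ring

lemma deriv_Grec_eq_digamma {t : ℂ} (ht : ∀ n : ℕ, t ≠ -(n:ℂ)) :
    deriv Grec t = -digamma t * Grec t := by
  have hΓ : Complex.Gamma t ≠ 0 := Complex.Gamma_ne_zero ht
  have hd : HasDerivAt Complex.Gamma (deriv Complex.Gamma t) t :=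
    (Complex.differentiableAt_Gamma t ht).hasDerivAt
  have h2 : HasDerivAt (fun s => (Complex.Gamma s)⁻¹)
      (-deriv Complex.Gamma t / Complex.Gamma t ^ 2) t := hd.inv hΓ
  have h3 : deriv Grec t = -deriv Complex.Gamma t / Complex.Gamma t ^ 2 := h2.deriv
  rw [h3]
  unfold digamma Grec
  ring


lemma pf_range : ∀ (n : ℕ) (x : ℂ), (∀ i : ℕ, i ≤ n → x + (i:ℂ) ≠ 0) →
    ∑ i ∈ Finset.range (n+1), (-1:ℂ)^i * (n.choose i : ℂ) * (x + i)⁻¹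
      = (n.factorial : ℂ) * (∏ i ∈ Finset.range (n+1), (x + i))⁻¹ := by
  intro n
  induction n with
  | zero => intro x hx; simp
  | succ n ih =>
    intro x hx
    have hx0 : ∀ i : ℕ, i ≤ n → x + (i:ℂ) ≠ 0 := fun i hi => hx i (hi.trans (Nat.le_succ n))
    have hx1 : ∀ i : ℕ, i ≤ n → (x+1) + (i:ℂ) ≠ 0 := by
      intro i hi
      have h := hx (i+1) (by omega)
      push_cast at h ⊢
      intro hc; apply h; rw [← hc]; ring
    have h0 := ih x hx0
    have h1 := ih (x+1) hx1
    have step1 : ∑ i ∈ Finset.range (n+1+1), (-1:ℂ)^i * ((n+1).choose i : ℂ) * (x + i)⁻¹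
        = ∑ i ∈ Finset.range (n+1), (-1:ℂ)^(i+1) * ((n+1).choose (i+1) : ℂ) * (x + (i+1:ℕ))⁻¹
          + (-1:ℂ)^0 * ((n+1).choose 0 : ℂ) * (x + (0:ℕ))⁻¹ :=
      Finset.sum_range_succ' _ (n+1)
    have split : ∀ i : ℕ, (-1:ℂ)^(i+1) * ((n+1).choose (i+1) : ℂ) * (x + (i+1:ℕ))⁻¹
        = (-1:ℂ)^(i+1) * (n.choose (i+1) : ℂ) * (x + (i+1:ℕ))⁻¹
          + (-((-1:ℂ)^i * (n.choose i : ℂ) * ((x+1) + i)⁻¹)) := by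
      intro i
      rw [Nat.choose_succ_succ']
      push_cast
      have : (x + ((i:ℂ)+1))⁻¹ = ((x+1) + i)⁻¹ := by ring_nf
      rw [this]; ring
    rw [step1]
    rw [Finset.sum_congr rfl (fun i _ => split i), Finset.sum_add_distrib, add_right_comm]
    have hpart1 : ∑ i ∈ Finset.range (n+1), (-1:ℂ)^(i+1) * (n.choose (i+1) : ℂ) * (x + (i+1:ℕ))⁻¹
          + (-1:ℂ)^0 * ((n+1).choose 0 : ℂ) * (x + (0:ℕ))⁻¹
        = ∑ i ∈ Finset.range (n+1), (-1:ℂ)^i * (n.choose i : ℂ) * (x + i)⁻¹ := by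
      have e1 : ∑ i ∈ Finset.range (n+1+1), (-1:ℂ)^i * (n.choose i : ℂ) * (x + i)⁻¹
          = ∑ i ∈ Finset.range (n+1), (-1:ℂ)^(i+1) * (n.choose (i+1) : ℂ) * (x + (i+1:ℕ))⁻¹
            + (-1:ℂ)^0 * (n.choose 0 : ℂ) * (x + (0:ℕ))⁻¹ :=
        Finset.sum_range_succ' _ (n+1)
      have e2 : ∑ i ∈ Finset.range (n+1+1), (-1:ℂ)^i * (n.choose i : ℂ) * (x + i)⁻¹
          = ∑ i ∈ Finset.range (n+1), (-1:ℂ)^i * (n.choose i : ℂ) * (x + i)⁻¹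
            + (-1:ℂ)^(n+1) * (n.choose (n+1) : ℂ) * (x + (n+1:ℕ))⁻¹ :=
        Finset.sum_range_succ _ (n+1)
      have hz : (n.choose (n+1) : ℂ) = 0 := by
        rw [Nat.choose_eq_zero_of_lt (Nat.lt_succ_self n)]; simp
      simp only [hz, mul_zero, zero_mul, add_zero] at e2
      rw [← e2] at *
      rw [e1]
      simp [Nat.choose_zero_right]
    rw [hpart1, h0]
    have hsum : ∑ i ∈ Finset.range (n+1), -((-1:ℂ)^i * (n.choose i : ℂ) * ((x+1) + i)⁻¹)
        = -((n.factorial : ℂ) * (∏ i ∈ Finset.range (n+1), ((x+1) + i))⁻¹) := by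
      rw [Finset.sum_neg_distrib, h1]
    rw [hsum]
    -- now the product algebra
    set P := ∏ i ∈ Finset.range (n+1), (x + (i:ℂ)) with hP
    set Q := ∏ i ∈ Finset.range (n+1), ((x+1) + (i:ℂ)) with hQ
    have hPne : P ≠ 0 := Finset.prod_ne_zero_iff.2 fun i hi =>
      hx0 i (Nat.lt_succ_iff.1 (Finset.mem_range.1 hi))
    have hQne : Q ≠ 0 := Finset.prod_ne_zero_iff.2 fun i hi =>
      hx1 i (Nat.lt_succ_iff.1 (Finset.mem_range.1 hi))
    have hxne : x ≠ 0 := by simpa using hx 0 (Nat.zero_le _)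
    have hkey : x * Q = P * (x + (n+1:ℂ)) := by
      have e3 : ∏ i ∈ Finset.range (n+1+1), (x + (i:ℂ)) = P * (x + ((n+1:ℕ):ℂ)) :=
        Finset.prod_range_succ _ (n+1)
      have e4 : ∏ i ∈ Finset.range (n+1+1), (x + (i:ℂ))
          = (∏ i ∈ Finset.range (n+1), (x + ((i+1:ℕ):ℂ))) * (x + ((0:ℕ):ℂ)) :=
        Finset.prod_range_succ' _ (n+1)
      have e5 : ∏ i ∈ Finset.range (n+1), (x + ((i+1:ℕ):ℂ)) = Q := by
        apply Finset.prod_congr rfl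
        intro i _
        push_cast
        ring
      rw [e5] at e4
      push_cast at e3 e4 ⊢
      rw [← e3, e4]; ring
    have e6 : ∏ i ∈ Finset.range (n+1+1), (x + (i:ℂ)) = P * (x + (n+1:ℂ)) := by
      have := Finset.prod_range_succ (fun i : ℕ => x + (i:ℂ)) (n+1)
      push_cast at this ⊢
      rw [this]
    rw [e6]
    have hxn1 : x + (n+1:ℂ) ≠ 0 := by
      have := hx (n+1) (le_refl _)
      push_cast at this; exact this
    have hfac : ((n+1).factorial : ℂ) = ((n:ℂ)+1) * (n.factorial : ℂ) := by
      rw [Nat.factorial_succ]; push_cast; ring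
    rw [hfac]
    have key2 : Q⁻¹ = x * (P * (x + ((n:ℂ)+1)))⁻¹ := by
      have h7 : (x * Q)⁻¹ = (P * (x + ((n:ℂ)+1)))⁻¹ := by rw [hkey]
      rw [← h7, mul_inv, ← mul_assoc, mul_inv_cancel₀ hxne, one_mul]
    rw [key2, mul_inv]
    field_simp
    ring

lemma icc_sum_to_range {β : Type*} [AddCommMonoid β] (M : ℕ) (f : ℕ → β) :
    ∑ j ∈ Finset.Icc 1 M, f j = ∑ i ∈ Finset.range M, f (1 + i) := by
  rw [← Finset.Ico_add_one_right_eq_Icc, Finset.sum_Ico_eq_sum_range]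
  simp

lemma icc_prod_to_range {β : Type*} [CommMonoid β] (M : ℕ) (f : ℕ → β) :
    ∏ j ∈ Finset.Icc 1 M, f j = ∏ i ∈ Finset.range M, f (1 + i) := by
  rw [← Finset.Ico_add_one_right_eq_Icc, Finset.prod_Ico_eq_prod_range]
  simp

lemma pf_icc (M : ℕ) (hM : 1 ≤ M) (x : ℂ) (hx : ∀ j : ℕ, 1 ≤ j → j ≤ M → x + (j:ℂ) ≠ 0) :
    ∏ j ∈ Finset.Icc 1 M, (x+j)⁻¹
      = ∑ j ∈ Finset.Icc 1 M,
          ((-1:ℂ)^(j-1) / (((j-1).factorial:ℂ) * ((M-j).factorial:ℂ))) * (x+j)⁻¹ := by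
  obtain ⟨n, rfl⟩ : ∃ n, M = n + 1 := ⟨M-1, by omega⟩
  have hx1 : ∀ i : ℕ, i ≤ n → (x+1) + (i:ℂ) ≠ 0 := by
    intro i hi
    have h := hx (i+1) (by omega) (by omega)
    push_cast at h ⊢
    intro hc; apply h; rw [← hc]; ring
  have key := pf_range n (x+1) hx1
  rw [icc_prod_to_range, icc_sum_to_range]
  have e1 : ∏ i ∈ Finset.range (n+1), (x + ((1+i:ℕ):ℂ))⁻¹
      = (∏ i ∈ Finset.range (n+1), ((x+1) + (i:ℂ)))⁻¹ := by
    rw [← Finset.prod_inv_distrib]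
    apply Finset.prod_congr rfl
    intro i _
    push_cast
    ring_nf
  rw [e1]
  have hfn : (n.factorial : ℂ) ≠ 0 := Nat.cast_ne_zero.2 (Nat.factorial_ne_zero n)
  have e2 : (∏ i ∈ Finset.range (n+1), ((x+1) + (i:ℂ)))⁻¹
      = (n.factorial : ℂ)⁻¹ * ∑ i ∈ Finset.range (n+1), (-1:ℂ)^i * (n.choose i : ℂ) * ((x+1) + i)⁻¹ := by
    rw [key, ← mul_assoc, inv_mul_cancel₀ hfn, one_mul]
  rw [e2, Finset.mul_sum]
  apply Finset.sum_congr rfl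
  intro i hi
  have hin : i ≤ n := Nat.lt_succ_iff.1 (Finset.mem_range.1 hi)
  have h1 : 1 + i - 1 = i := by omega
  have h2 : n + 1 - (1 + i) = n - i := by omega
  rw [h1, h2]
  have hc : (n.choose i : ℂ) = (n.factorial : ℂ) / ((i.factorial : ℂ) * (((n-i).factorial : ℂ))) :=
    Nat.cast_choose ℂ hin
  have harg : x + ((1+i:ℕ):ℂ) = x + 1 + (i:ℂ) := by push_cast; ring
  rw [harg, hc]
  have hi1 : (i.factorial : ℂ) ≠ 0 := Nat.cast_ne_zero.2 (Nat.factorial_ne_zero i)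
  have hi2 : (((n-i).factorial : ℂ)) ≠ 0 := Nat.cast_ne_zero.2 (Nat.factorial_ne_zero _)
  field_simp

lemma Grec_prod (M : ℕ) (ε : ℂ) (hε : ∀ j : ℕ, 1 ≤ j → j ≤ M → ε + (j:ℂ) ≠ 0) :
    Grec (1 + ε + M) = Grec (1 + ε) * ∏ j ∈ Finset.Icc 1 M, (ε + j)⁻¹ := by
  induction M with
  | zero => simp
  | succ n ihn =>
    have hs : (1 + ε + (n:ℂ)) ≠ 0 := by
      have h := hε (n+1) (by omega) (le_refl _)
      push_cast at h ⊢
      intro hc; apply h; rw [← hc]; ring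
    have harg : (1 + ε + ((n+1:ℕ):ℂ)) = (1 + ε + (n:ℂ)) + 1 := by push_cast; ring
    rw [harg, Grec_add_one hs, ihn (fun j h1 h2 => hε j h1 (h2.trans (Nat.le_succ n))),
      Finset.prod_Icc_succ_top (by omega)]
    push_cast
    try ring

lemma deriv_Grec_shift (M : ℕ) (ε : ℂ) (hε : ∀ j : ℕ, 1 ≤ j → ε + (j:ℂ) ≠ 0) :
    deriv Grec (1 + ε + M) =
      -digamma (1 + ε) * Grec (1 + ε + M) +
        Grec (1 + ε) * ∑ j ∈ Finset.Icc 1 M,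
          ((-1:ℂ) ^ j / (((j - 1).factorial : ℂ) * ((M - j).factorial : ℂ))) / (ε + j) ^ 2 := by
  have hne : ∀ n : ℕ, (1 + ε : ℂ) ≠ -(n:ℂ) := by
    intro n hc
    apply hε (n+1) (by omega)
    push_cast
    linear_combination hc
  rcases Nat.eq_zero_or_pos M with hM | hM
  · subst hM
    simp only [Nat.cast_zero, add_zero, show Finset.Icc 1 0 = (∅ : Finset ℕ) by rfl,
      Finset.sum_empty, mul_zero]
    simp [deriv_Grec_eq_digamma hne]
  · set A : ℕ → ℂ := fun j => (-1:ℂ)^(j-1) / (((j-1).factorial:ℂ) * ((M-j).factorial:ℂ)) with hA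
    have hUopen : IsOpen {t : ℂ | ∀ j ∈ Finset.Icc 1 M, t + (j:ℂ) ≠ 0} := by
      have : {t : ℂ | ∀ j ∈ Finset.Icc 1 M, t + (j:ℂ) ≠ 0}
          = ⋂ j ∈ (Finset.Icc 1 M : Finset ℕ), {t : ℂ | t + (j:ℂ) ≠ 0} := by
        ext t; simp
      rw [this]
      apply isOpen_biInter_finset
      intro j _
      exact isOpen_ne.preimage (continuous_id.add continuous_const)
    have hU : {t : ℂ | ∀ j ∈ Finset.Icc 1 M, t + (j:ℂ) ≠ 0} ∈ nhds ε :=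
      hUopen.mem_nhds (fun j hj => hε j (Finset.mem_Icc.1 hj).1)
    have heq : (fun t => Grec (1 + t + (M:ℂ)))
        =ᶠ[nhds ε] fun t => Grec (1+t) * ∑ j ∈ Finset.Icc 1 M, A j * (t+j)⁻¹ := by
      filter_upwards [hU] with t ht
      have ht' : ∀ j : ℕ, 1 ≤ j → j ≤ M → t + (j:ℂ) ≠ 0 := fun j h1 h2 =>
        ht j (Finset.mem_Icc.2 ⟨h1, h2⟩)
      rw [Grec_prod M t ht', pf_icc M hM t ht']
    have hd1 : HasDerivAt (fun t => Grec (1+t)) (deriv Grec (1+ε)) ε := by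
      have h := (hasDerivAt_Grec (1+ε)).comp ε ((hasDerivAt_id ε).const_add 1)
      simpa [Function.comp_def] using h
    have hd2 : HasDerivAt (fun t : ℂ => ∑ j ∈ Finset.Icc 1 M, A j * (t+j)⁻¹)
        (∑ j ∈ Finset.Icc 1 M, A j * (-1 / (ε+j)^2)) ε := by
      apply HasDerivAt.fun_sum
      intro j hj
      have hj1 : ε + (j:ℂ) ≠ 0 := hε j (Finset.mem_Icc.1 hj).1
      have h := (((hasDerivAt_id ε).add_const (j:ℂ)).inv hj1).const_mul (A j)
      simpa using h
    have hd3 : HasDerivAt (fun t => Grec (1+t) * ∑ j ∈ Finset.Icc 1 M, A j * (t+j)⁻¹) _ ε := hd1.mul hd2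
    have hcomp : HasDerivAt (fun t => Grec (1 + t + (M:ℂ))) (deriv Grec (1+ε+M)) ε := by
      have h := (hasDerivAt_Grec (1+ε+(M:ℂ))).comp ε (((hasDerivAt_id ε).const_add 1).add_const (M:ℂ))
      simpa [Function.comp_def] using h
    rw [← hcomp.deriv, heq.deriv_eq, hd3.deriv]
    have hback : Grec (1+ε) * ∑ j ∈ Finset.Icc 1 M, A j * (ε+j)⁻¹ = Grec (1+ε+(M:ℂ)) := by
      rw [← pf_icc M hM ε (fun j h1 _ => hε j h1), ← Grec_prod M ε (fun j h1 _ => hε j h1)]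
    have hterm : ∀ j ∈ Finset.Icc 1 M, A j * (-1 / (ε+j)^2)
        = ((-1:ℂ) ^ j / (((j - 1).factorial : ℂ) * ((M - j).factorial : ℂ))) / (ε + j) ^ 2 := by
      intro j hj
      have hj1 : 1 ≤ j := (Finset.mem_Icc.1 hj).1
      have hjj : j - 1 + 1 = j := by omega
      rw [hA]
      simp only []
      rw [← hjj, pow_succ]
      simp only [Nat.add_sub_cancel]
      ring
    rw [Finset.sum_congr rfl hterm]
    rw [deriv_Grec_eq_digamma hne, ← hback]
    ring

lemma Grec_bounds (ν0 : ℂ) : ∃ C : ℝ, 0 ≤ C ∧ ∀ ν ∈ Metric.closedBall ν0 1, ∀ m : ℕ,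
    ‖Grec (ν + 1 + m)‖ ≤ C ∧ ‖deriv Grec (ν + 1 + m)‖ ≤ C * (m + 1) := by
  set n0 : ℕ := ⌈‖ν0‖⌉₊ + 1 with hn0
  have hν_norm : ∀ ν ∈ Metric.closedBall ν0 1, ‖ν‖ ≤ (n0 : ℝ) := by
    intro ν hν
    have h1 : ‖ν - ν0‖ ≤ 1 := by simpa [Metric.mem_closedBall, dist_eq_norm] using hν
    calc ‖ν‖ = ‖ν0 + (ν - ν0)‖ := by ring_nf
      _ ≤ ‖ν0‖ + ‖ν - ν0‖ := norm_add_le _ _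
      _ ≤ ‖ν0‖ + 1 := by linarith
      _ ≤ (⌈‖ν0‖⌉₊ : ℝ) + 1 := by have := Nat.le_ceil ‖ν0‖; linarith
      _ = (n0 : ℝ) := by push_cast [hn0]; ring
  have hlarge : ∀ ν ∈ Metric.closedBall ν0 1, ∀ k : ℕ, n0 ≤ k → (1:ℝ) ≤ ‖ν + 1 + k‖ := by
    intro ν hν k hk
    have h1 : (ν + 1 + k).re = ν.re + 1 + k := by simp
    have h2 : ν.re ≥ -(n0:ℝ) := by
      have := hν_norm ν hν
      have h3 : |ν.re| ≤ ‖ν‖ := Complex.abs_re_le_norm ν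
      cases abs_le.1 h3 with
      | intro hl hr => linarith
    have h4 : (ν + 1 + k).re ≥ 1 := by
      rw [h1]
      have : (n0:ℝ) ≤ (k:ℝ) := Nat.cast_le.2 hk
      linarith
    calc (1:ℝ) ≤ (ν + 1 + k).re := h4
      _ ≤ |(ν + 1 + k).re| := le_abs_self _
      _ ≤ ‖ν + 1 + k‖ := Complex.abs_re_le_norm _
  set R : ℝ := ‖ν0‖ + 2 + n0 with hR
  obtain ⟨B0, hB0⟩ := (isCompact_closedBall (0:ℂ) R).exists_bound_of_continuousOn
    continuous_Grec.continuousOn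
  obtain ⟨B1, hB1⟩ := (isCompact_closedBall (0:ℂ) R).exists_bound_of_continuousOn
    continuous_derivGrec.continuousOn
  set C : ℝ := max (max B0 B1) 1 with hC
  have hCpos : (0:ℝ) ≤ C := le_trans zero_le_one (le_max_right _ _)
  have hC1 : (1:ℝ) ≤ C := le_max_right _ _
  have hmemR : ∀ ν ∈ Metric.closedBall ν0 1, ∀ m : ℕ, m ≤ n0 →
      (ν + 1 + m) ∈ Metric.closedBall (0:ℂ) R := by
    intro ν hν m hm
    rw [Metric.mem_closedBall, dist_zero_right]
    calc ‖ν + 1 + m‖ ≤ ‖ν‖ + ‖(1:ℂ)‖ + ‖(m:ℂ)‖ := by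
          refine le_trans (norm_add_le _ _) ?_
          have := norm_add_le ν (1:ℂ)
          linarith
      _ ≤ (‖ν0‖ + 1) + 1 + n0 := by
          have h1 : ‖ν‖ ≤ ‖ν0‖ + 1 := by
            have h2 : ‖ν - ν0‖ ≤ 1 := by simpa [Metric.mem_closedBall, dist_eq_norm] using hν
            calc ‖ν‖ = ‖ν0 + (ν - ν0)‖ := by ring_nf
              _ ≤ ‖ν0‖ + ‖ν - ν0‖ := norm_add_le _ _
              _ ≤ ‖ν0‖ + 1 := by linarith
          have h3 : ‖(m:ℂ)‖ ≤ (n0:ℝ) := by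
            rw [Complex.norm_natCast]
            exact_mod_cast hm
          simp only [norm_one]
          linarith
      _ = R := by rw [hR]; ring
  refine ⟨C, hCpos, ?_⟩
  intro ν hν m
  induction m with
  | zero =>
    have hmem := hmemR ν hν 0 (Nat.zero_le _)
    constructor
    · exact le_trans (hB0 _ hmem) (le_trans (le_max_left _ _) (le_max_left _ _))
    · have h4 := hB1 _ hmem
      have h5 : B1 ≤ C := le_trans (le_max_right B0 B1) (le_max_left _ _)
      push_cast at h4 ⊢
      linarith
  | succ k ih =>
    by_cases hk : k + 1 ≤ n0
    · have hmem := hmemR ν hν (k+1) hk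
      constructor
      · exact le_trans (hB0 _ hmem) (le_trans (le_max_left _ _) (le_max_left _ _))
      · have h4 := hB1 _ hmem
        have h5 : B1 ≤ C := le_trans (le_max_right B0 B1) (le_max_left _ _)
        have h6 : (0:ℝ) ≤ (k:ℝ) := Nat.cast_nonneg k
        have h7 : C ≤ C * ((k:ℝ)+1+1) := by nlinarith
        push_cast at h4 ⊢
        linarith
    · have hkn : n0 ≤ k := by omega
      have hs : (1:ℝ) ≤ ‖ν + 1 + k‖ := hlarge ν hν k hkn
      have hsne : (ν + 1 + (k:ℂ)) ≠ 0 := by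
        intro hzero
        rw [hzero] at hs
        simp at hs
        linarith
      have harg : ν + 1 + ((k+1:ℕ):ℂ) = (ν + 1 + k) + 1 := by push_cast; ring
      have hinv : ‖(ν + 1 + (k:ℂ))⁻¹‖ ≤ 1 := by
        rw [norm_inv]
        rw [inv_le_one_iff₀]
        right; exact hs
      have hinv2 : ‖((ν + 1 + (k:ℂ))^2)⁻¹‖ ≤ 1 := by
        rw [norm_inv, norm_pow]
        rw [inv_le_one_iff₀]
        right; nlinarith
      constructor
      · rw [harg, Grec_add_one hsne, norm_mul]
        calc ‖(ν + 1 + (k:ℂ))⁻¹‖ * ‖Grec (ν + 1 + k)‖ ≤ 1 * C := by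
              apply mul_le_mul hinv ih.1 (norm_nonneg _) zero_le_one
          _ = C := one_mul C
      · rw [harg, deriv_Grec_add_one hsne]
        calc ‖-((ν + 1 + (k:ℂ))^2)⁻¹ * Grec (ν+1+k) + (ν + 1 + (k:ℂ))⁻¹ * deriv Grec (ν+1+k)‖
            ≤ ‖((ν + 1 + (k:ℂ))^2)⁻¹‖ * ‖Grec (ν+1+k)‖
              + ‖(ν + 1 + (k:ℂ))⁻¹‖ * ‖deriv Grec (ν+1+k)‖ := by
              refine le_trans (norm_add_le _ _) ?_
              rw [norm_mul, norm_mul, norm_neg]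
          _ ≤ 1 * C + 1 * (C * (k+1)) := by
              refine add_le_add ?_ ?_
              · exact mul_le_mul hinv2 ih.1 (norm_nonneg _) zero_le_one
              · exact mul_le_mul hinv ih.2 (norm_nonneg _) zero_le_one
          _ ≤ C * ((k+1:ℕ) + 1) := by push_cast; nlinarith

/-- First derivative, case `N ≥ 0`:
`∂/∂ν J_ν(z) = (log(z/2) − ψ(1+ε)) J_ν(z) + (z/2)^ν/Γ(1+ε) ·
∑ₘ (−z²/4)ᵐ/m! ∑_{j=1}^{m+N} (−1)ʲ/((j−1)!(m+N−j)!) · 1/(ε+j)²`. -/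
theorem deriv_besselJ_N_nonneg (z : ℝ) (hz : 0 < z) (N : ℕ) (ε : ℂ)
    (hε : ∀ j : ℕ, 1 ≤ j → ε + (j : ℂ) ≠ 0) :
    deriv (fun ν => besselJ z ν) ((N : ℂ) + ε) =
      (Complex.log ((z : ℂ) / 2) - digamma (1 + ε)) * besselJ z ((N : ℂ) + ε) +
        Complex.exp (((N : ℂ) + ε) * Complex.log ((z : ℂ) / 2)) / Complex.Gamma (1 + ε) *
          ∑' m : ℕ, ((-(z : ℂ) ^ 2 / 4) ^ m / (m.factorial : ℂ) *
            ∑ j ∈ Finset.Icc 1 (m + N),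
              ((-1) ^ j / (((j - 1).factorial : ℂ) * ((m + N - j).factorial : ℂ))) /
                (ε + (j : ℂ)) ^ 2) := by

  set L : ℂ := Complex.log ((z:ℂ)/2) with hL
  set a : ℂ := -(z:ℂ)^2/4 with ha
  set ν0 : ℂ := (N:ℂ) + ε with hν0
  obtain ⟨C, hCpos, hC⟩ := Grec_bounds ν0
  set f : ℕ → ℂ → ℂ := fun m ν => a ^ m / (m.factorial : ℂ) * Grec (ν + 1 + m) with hf
  set f' : ℕ → ℂ → ℂ := fun m ν => a ^ m / (m.factorial : ℂ) * deriv Grec (ν + 1 + m) with hf'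
  set u : ℕ → ℝ := fun m => ‖a‖^m / (m.factorial : ℝ) * (C * (m + 1)) with hu_def
  have hbJ : ∀ ν : ℂ, besselJ z ν = Complex.exp (ν * L) * ∑' m, f m ν := by
    intro ν
    unfold besselJ
    rw [← hL, ← ha]
    congr 1
    apply tsum_congr
    intro m
    rw [hf]
    simp only []
    rw [← div_div, div_eq_mul_inv]
    rfl
  have hnorm_coef : ∀ m : ℕ, ‖a ^ m / (m.factorial : ℂ)‖ = ‖a‖^m / (m.factorial : ℝ) := by
    intro m
    rw [norm_div, norm_pow, Complex.norm_natCast]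
  have hderivf : ∀ (m : ℕ) (ν : ℂ), HasDerivAt (f m) (f' m ν) ν := by
    intro m ν
    have h := (hasDerivAt_Grec (ν+1+(m:ℂ))).comp ν
      (((hasDerivAt_id ν).add_const (1:ℂ)).add_const (m:ℂ))
    have h2 : HasDerivAt (fun y : ℂ => Grec (y + 1 + m)) (deriv Grec (ν+1+m)) ν := by
      simpa [Function.comp_def] using h
    simpa [hf, hf'] using h2.const_mul (a ^ m / (m.factorial : ℂ))
  have hf'b : ∀ (m : ℕ), ∀ ν ∈ Metric.ball ν0 1, ‖f' m ν‖ ≤ u m := by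
    intro m ν hν
    rw [hf']
    simp only []
    rw [norm_mul, hnorm_coef]
    apply mul_le_mul_of_nonneg_left ((hC ν (ball_subset_closedBall hν) m).2)
    positivity
  have hfb : ∀ (m : ℕ), ∀ ν ∈ Metric.closedBall ν0 1, ‖f m ν‖ ≤ ‖a‖^m / (m.factorial : ℝ) * C := by
    intro m ν hν
    rw [hf]
    simp only []
    rw [norm_mul, hnorm_coef]
    apply mul_le_mul_of_nonneg_left ((hC ν hν m).1)
    positivity
  have hu : Summable u := by
    have hle : ∀ m : ℕ, u m ≤ C * 2 * ((2*‖a‖)^m / (m.factorial : ℝ)) := by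
      intro m
      have h1 : ((m:ℝ) + 1) ≤ 2 * 2^m := by
        have h2 : m + 1 ≤ 2^(m+1) := Nat.lt_two_pow_self.le
        have h3 : ((m+1:ℕ):ℝ) ≤ ((2^(m+1):ℕ):ℝ) := Nat.cast_le.2 h2
        push_cast at h3
        rw [pow_succ] at h3
        linarith
      have hA : (0:ℝ) ≤ ‖a‖^m := by positivity
      have h4 : (C*‖a‖^m)*((m:ℝ)+1) ≤ (C*‖a‖^m)*(2*2^m) :=
        mul_le_mul_of_nonneg_left h1 (mul_nonneg hCpos hA)
      calc u m = ‖a‖^m * (C*((m:ℝ)+1)) / (m.factorial : ℝ) := by simp only [hu_def]; ring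
        _ ≤ (C*2*(2^m*‖a‖^m)) / (m.factorial : ℝ) := by
            have hfa : (0:ℝ) < (m.factorial:ℝ) := by positivity
            rw [div_le_div_iff₀ hfa hfa]
            nlinarith [mul_le_mul_of_nonneg_right h4 hfa.le]
        _ = C * 2 * ((2*‖a‖)^m / (m.factorial : ℝ)) := by rw [mul_pow]; ring
    apply Summable.of_nonneg_of_le (fun m => by rw [hu_def]; positivity) hle
    exact (Real.summable_pow_div_factorial (2*‖a‖)).mul_left (C*2)
  have hfs : ∀ ν ∈ Metric.closedBall ν0 1, Summable (fun m => f m ν) := by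
    intro ν hν
    apply Summable.of_norm
    apply Summable.of_nonneg_of_le (fun m => norm_nonneg _) (fun m => hfb m ν hν)
    exact (Real.summable_pow_div_factorial ‖a‖).mul_right C
  have hSd : HasDerivAt (fun ν => ∑' m, f m ν) (∑' m, f' m ν0) ν0 := by
    apply hasDerivAt_of_tendstoUniformlyOn (Metric.isOpen_ball (x := ν0) (ε := 1))
      (tendstoUniformlyOn_tsum_nat hu hf'b)
      (Filter.Eventually.of_forall (fun n ν hν => HasDerivAt.fun_sum (fun m _ => hderivf m ν)))
      (fun ν hν => ((hfs ν (ball_subset_closedBall hν)).hasSum.tendsto_sum_nat))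
      (Metric.mem_ball_self one_pos)
  have hexp : HasDerivAt (fun ν : ℂ => Complex.exp (ν * L)) (Complex.exp (ν0 * L) * L) ν0 := by
    simpa using ((hasDerivAt_id ν0).mul_const L).cexp
  have hJd : HasDerivAt (fun ν => besselJ z ν)
      (Complex.exp (ν0*L) * L * (∑' m, f m ν0) + Complex.exp (ν0*L) * (∑' m, f' m ν0)) ν0 := by
    have hfun : (fun ν => besselJ z ν) = fun ν => Complex.exp (ν*L) * ∑' m, f m ν := funext hbJ
    rw [hfun]
    exact hexp.mul hSd
  rw [hJd.deriv]
  have harg : ∀ m : ℕ, ν0 + 1 + (m:ℂ) = 1 + ε + ((m+N : ℕ):ℂ) := by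
    intro m; rw [hν0]; push_cast; ring
  set T : ℕ → ℂ := fun m => ∑ j ∈ Finset.Icc 1 (m + N),
      ((-1:ℂ) ^ j / (((j - 1).factorial : ℂ) * ((m + N - j).factorial : ℂ))) / (ε + (j:ℂ)) ^ 2
    with hT
  have hkey : ∀ m : ℕ, f' m ν0 = -digamma (1+ε) * f m ν0
      + Grec (1+ε) * (a^m/(m.factorial:ℂ) * T m) := by
    intro m
    rw [hf', hf, hT]
    simp only []
    rw [harg m, deriv_Grec_shift (m+N) ε hε]
    ring
  have hsum_f : Summable (fun m => f m ν0) := hfs ν0 (Metric.mem_closedBall_self zero_le_one)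
  have hsum_f' : Summable (fun m => f' m ν0) := by
    apply Summable.of_norm
    apply Summable.of_nonneg_of_le (fun m => norm_nonneg _)
      (fun m => hf'b m ν0 (Metric.mem_ball_self one_pos)) hu
  have hsum_A : Summable (fun m => -digamma (1+ε) * f m ν0) := hsum_f.mul_left _
  have hsum_B : Summable (fun m => Grec (1+ε) * (a^m/(m.factorial:ℂ) * T m)) := by
    have he : (fun m => Grec (1+ε) * (a^m/(m.factorial:ℂ) * T m))
        = fun m => f' m ν0 - (-digamma (1+ε) * f m ν0) := by
      funext m; rw [hkey m]; ring
    rw [he]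
    exact hsum_f'.sub hsum_A
  have hsplit : ∑' m, f' m ν0 = -digamma (1+ε) * (∑' m, f m ν0)
      + Grec (1+ε) * ∑' m, (a^m/(m.factorial:ℂ) * T m) := by
    calc ∑' m, f' m ν0
        = ∑' m, (-digamma (1+ε) * f m ν0 + Grec (1+ε) * (a^m/(m.factorial:ℂ) * T m)) :=
          tsum_congr hkey
      _ = (∑' m, -digamma (1+ε) * f m ν0)
          + ∑' m, Grec (1+ε) * (a^m/(m.factorial:ℂ) * T m) := Summable.tsum_add hsum_A hsum_B
      _ = -digamma (1+ε) * (∑' m, f m ν0)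
          + Grec (1+ε) * ∑' m, (a^m/(m.factorial:ℂ) * T m) := by rw [tsum_mul_left, tsum_mul_left]
  rw [hsplit, hbJ ν0]
  have hGrec : Grec (1+ε) = (Complex.Gamma (1+ε))⁻¹ := rfl
  rw [hGrec, div_eq_mul_inv]
  ring
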